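/- arXiv:0812.0489 — 2 statements merged into one kernel-verified Lean document; each statement's English description precedes it below -/
import Mathlib

section
/- Every compactly generated metrizable topological group G admits a sequence (s_n) converging to the identity 1 such that the subgroup generated by {s_n : n ∈ ℕ} is dense in G. -/
open Filter Topology Pointwise

/-- Every compactly generated metrizable Hausdorff topological group `G` admits a sequence
converging to the identity whose range generates a dense subgroup of `G`. -/
theorem stmt_8 {G : Type*} [Group G] [TopologicalSpace G] [IsTopologicalGroup G] [T2Space G]
    [TopologicalSpace.MetrizableSpace G]
    (K : Set G) (hK : IsCompact K) (hgen : Subgroup.closure K = ⊤) :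
    ∃ s : ℕ → G, Tendsto s atTop (𝓝 1) ∧
      Dense (Subgroup.closure (Set.range s) : Set G) := by
  classical
  obtain ⟨u, hu⟩ := (𝓝 (1 : G)).exists_antitone_basis
  have hcov : ∀ n : ℕ, ∃ t : Finset G, K ⊆ ⋃ c ∈ t, c • u n := by
    intro n
    obtain ⟨t, -, ht⟩ := hK.elim_nhds_subcover (fun c => c • u n)
      (fun x _ => by simpa using smul_mem_nhds_smul x (hu.mem n))
    exact ⟨t, ht⟩
  choose t ht using hcov
  set w : ℕ → Set G := fun n => {g | ∃ a ∈ u n, ∃ b ∈ u n, g = a * b⁻¹} with hwdef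
  have h1w : ∀ n, (1 : G) ∈ w n := fun n =>
    ⟨1, mem_of_mem_nhds (hu.mem n), 1, mem_of_mem_nhds (hu.mem n), by simp⟩
  set L : ℕ → List G := fun n =>
    match n with
    | 0 => (t 0).toList
    | n + 1 => ((t n ×ˢ t (n+1)).toList.map
        (fun p => if p.1⁻¹ * p.2 ∈ w n then p.1⁻¹ * p.2 else 1)) with hLdef
  set s : ℕ → G := fun m => (L m.unpair.1).getD m.unpair.2 1 with hsdef
  -- every element of every list is in the range of s
  have hrange : ∀ n, ∀ g ∈ L n, g ∈ Set.range s := by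
    intro n g hg
    obtain ⟨k, hk, hgk⟩ := List.mem_iff_getElem.mp hg
    refine ⟨Nat.pair n k, ?_⟩
    simp only [hsdef, Nat.unpair_pair]
    rw [List.getD_eq_getElem _ _ hk, hgk]
  -- elements of L (n+1) lie in w n
  have hmemw : ∀ n, ∀ g ∈ L (n+1), g ∈ w n := by
    intro n g hg
    simp only [hLdef, List.mem_map] at hg
    obtain ⟨p, -, hp⟩ := hg
    split at hp
    · exact hp ▸ ‹_›
    · exact hp ▸ h1w n
  refine ⟨s, ?_, ?_⟩
  · -- Tendsto
    rw [← Nat.cofinite_eq_atTop]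
    intro W hW
    obtain ⟨V, hV, hVW⟩ := exists_nhds_split_inv hW
    obtain ⟨N, -, hN⟩ := hu.1.mem_iff.mp hV
    have hwW : ∀ n, N ≤ n → w n ⊆ W := by
      rintro n hn g ⟨a, ha, b, hb, rfl⟩
      have ha' : a ∈ V := hN (hu.2 hn ha)
      have hb' : b ∈ V := hN (hu.2 hn hb)
      simpa [div_eq_mul_inv] using hVW a ha' b hb'
    have h1W : (1 : G) ∈ W := mem_of_mem_nhds hW
    set B := (Finset.range (N+1)).sup fun n => (L n).length with hB
    have hgood : ∀ m : ℕ, N < m.unpair.1 → s m ∈ W := by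
      intro m hm
      rcases hn : m.unpair.1 with _ | n'
      · omega
      · by_cases hlen : m.unpair.2 < (L (n'+1)).length
        · have hs : s m = (L (n'+1))[m.unpair.2] := by
            simp only [hsdef, hn]
            exact List.getD_eq_getElem _ _ hlen
          rw [hs]
          exact hwW n' (by omega) (hmemw n' _ (List.getElem_mem hlen))
        · have hs : s m = 1 := by
            simp only [hsdef, hn]
            exact List.getD_eq_default _ _ (by omega)
          rw [hs]; exact h1W
    have hsub : {m | s m ∉ W} ⊆ Nat.unpair ⁻¹' (Set.Iic N ×ˢ Set.Iio B) := by
      intro m hm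
      have hn : m.unpair.1 ≤ N := by
        by_contra h; push_neg at h; exact hm (hgood m h)
      have hk : m.unpair.2 < (L m.unpair.1).length := by
        by_contra h; push_neg at h
        apply hm
        have hs : s m = 1 := by
          simp only [hsdef]; exact List.getD_eq_default _ _ h
        rw [hs]; exact h1W
      exact ⟨hn, lt_of_lt_of_le hk
        (Finset.le_sup (f := fun n => (L n).length) (Finset.mem_range.mpr (by omega)))⟩
    have hfin : {m | s m ∉ W}.Finite := by
      refine Set.Finite.subset (Set.Finite.preimage ?_ ?_) hsub
      · intro a _ b _ hab
        have := congrArg (fun p => Nat.pair p.1 p.2) hab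
        simpa [Nat.pair_unpair] using this
      · exact (Set.finite_Iic N).prod (Set.finite_Iio _)
    rw [mem_map, mem_cofinite]
    exact hfin.subset (fun m hm => hm)
  · -- Density
    set H := Subgroup.closure (Set.range s) with hH
    have key : K ⊆ closure (H : Set G) := by
      intro x hx
      have hcn : ∀ n, ∃ c ∈ t n, x ∈ c • u n := by
        intro n
        have := ht n hx
        simpa using this
      choose c hc hxc using hcn
      have hcu : ∀ n, (c n)⁻¹ * x ∈ u n := by
        intro n
        have := (Set.mem_smul_set_iff_inv_smul_mem).mp (hxc n)
        simpa using this
      have hcH : ∀ n, c n ∈ H := by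
        intro n
        induction n with
        | zero =>
            exact Subgroup.subset_closure (hrange 0 _ ((Finset.mem_toList).mpr (hc 0)))
        | succ n ih =>
            have hq : (c n)⁻¹ * c (n+1) ∈ w n := by
              refine ⟨(c n)⁻¹ * x, hcu n, (c (n+1))⁻¹ * x, hu.2 (Nat.le_succ n) (hcu (n+1)), ?_⟩
              group
            have hqL : (c n)⁻¹ * c (n+1) ∈ L (n+1) := by
              simp only [hLdef, List.mem_map]
              exact ⟨(c n, c (n+1)),
                (Finset.mem_toList).mpr (Finset.mem_product.mpr ⟨hc n, hc (n+1)⟩),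
                by simp [hq]⟩
            have := mul_mem ih (Subgroup.subset_closure (hrange (n+1) _ hqL))
            simpa using this
      have hclim : Tendsto c atTop (𝓝 x) := by
        have hd : Tendsto (fun n => (c n)⁻¹ * x) atTop (𝓝 (1 : G)) := hu.tendsto hcu
        have : Tendsto (fun n => x * ((c n)⁻¹ * x)⁻¹) atTop (𝓝 (x * (1 : G)⁻¹)) :=
          tendsto_const_nhds.mul hd.inv
        simpa using this
      exact mem_closure_of_tendsto hclim (Eventually.of_forall (fun n => hcH n))
    have htop : H.topologicalClosure = ⊤ := by
      rw [← top_le_iff, ← hgen]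
      exact (Subgroup.closure_le _).mpr key
    rw [dense_iff_closure_eq]
    have : (H.topologicalClosure : Set G) = Set.univ := by rw [htop]; rfl
    exact this
end

section
/- Let H be a locally compact Hausdorff topological group, G an open subgroup of H admitting a suitable set S, and X ⊆ H \ G a set of representatives of the distinct nontrivial left cosets of G in H (one representative per coset xG ⊆ H \ G). Then S ∪ X is a suitable set for H. -/
open Set Filter Topology


/-- A *suitable set* for a topological group `H`: a subset `S` that is discrete (in the
subspace topology), with `S ∪ {1}` closed in `H`, and generating a dense subgroup. -/
def IsSuitableSet (H : Type*) [Group H] [TopologicalSpace H] (S : Set H) : Prop :=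
  DiscreteTopology ↥S ∧ IsClosed (S ∪ {1}) ∧ Dense (Subgroup.closure S : Set H)

/-- Let `H` be a locally compact Hausdorff topological group, `G` an open subgroup of `H`
having a suitable set `S`, and `X ⊆ H \ G` a set containing exactly one representative of
each left coset of `G` contained in `H \ G`. Then `S ∪ X` is a suitable set for `H`. -/
theorem stmt_18 {H : Type*} [Group H] [TopologicalSpace H] [IsTopologicalGroup H] [T2Space H]
    [LocallyCompactSpace H]
    (G : Subgroup H) (hGopen : IsOpen (G : Set H))
    (S : Set G) (hS : IsSuitableSet G S)
    (X : Set H) (hXG : X ⊆ (G : Set H)ᶜ)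
    (hrep : ∀ h : H, h ∉ G → ∃! x, x ∈ X ∧ x⁻¹ * h ∈ G) :
    IsSuitableSet H ((Subtype.val '' S) ∪ X) := by
  obtain ⟨hSdisc, hSclosed, hSdense⟩ := hS
  have hGclosed : IsClosed (G : Set H) := G.isClosed_of_isOpen hGopen
  set T : Set H := (Subtype.val '' S) ∪ X with hT
  -- each point of T is isolated by an open set of H
  have key : ∀ t ∈ T, ∃ U : Set H, IsOpen U ∧ t ∈ U ∧ U ∩ T ⊆ {t} := by
    rintro t (⟨s, hsS, rfl⟩ | htX)
    · -- from discreteness of S inside G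
      have hbot : 𝓝[≠] s ⊓ Filter.principal S = ⊥ :=
        discreteTopology_subtype_iff.mp hSdisc s hsS
      have hbot' : 𝓝[({s}ᶜ ∩ S)] s = ⊥ := by
        rw [nhdsWithin_inter']
        exact hbot
      have hmem : (∅ : Set G) ∈ 𝓝[({s}ᶜ ∩ S)] s := by rw [hbot']; trivial
      obtain ⟨u, huo, hsu, hsub⟩ := mem_nhdsWithin.mp hmem
      obtain ⟨U₀, hU₀, hU₀u⟩ := isOpen_induced_iff.mp huo
      refine ⟨U₀ ∩ G, hU₀.inter hGopen, ⟨by rw [← hU₀u] at hsu; exact hsu, s.2⟩, ?_⟩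
      rintro h ⟨⟨hhU₀, hhG⟩, (⟨s', hs'S, rfl⟩ | hhX)⟩
      · have hs'u : s' ∈ u := by rw [← hU₀u]; exact hhU₀
        by_contra hne
        have : s' ∈ u ∩ ({s}ᶜ ∩ S) := ⟨hs'u, fun h' => hne (by simpa using congrArg Subtype.val h'), hs'S⟩
        exact hsub this
      · exact absurd hhG (hXG hhX)
    · -- for x ∈ X use the coset xG minus nothing
      refine ⟨(fun h => t⁻¹ * h) ⁻¹' G, (continuous_const.mul continuous_id).isOpen_preimage _ hGopen,
        by simp only [Set.mem_preimage, inv_mul_cancel]; exact G.one_mem, ?_⟩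
      rintro h ⟨hhU, (⟨s', hs'S, rfl⟩ | hhX)⟩
      · exact absurd (by simpa using G.mul_mem hhU (G.inv_mem s'.2) : t⁻¹ ∈ G)
          (fun ht => hXG htX (by simpa using G.inv_mem ht))
      · have hhG : h ∉ G := fun hh => hXG hhX hh
        obtain ⟨x, -, huniq⟩ := hrep h hhG
        have h1 : t = x := huniq t ⟨htX, hhU⟩
        have h2 : h = x := huniq h ⟨hhX, by rw [inv_mul_cancel]; exact G.one_mem⟩
        simp [h1, h2]
  constructor
  · -- discreteness
    rw [discreteTopology_subtype_iff]
    intro t htT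
    rw [← nhdsWithin_inter', ← Filter.empty_mem_iff_bot, mem_nhdsWithin]
    obtain ⟨U, hUo, htU, hsub⟩ := key t htT
    exact ⟨U, hUo, htU, fun h ⟨hhU, hht, hhT⟩ => hht (hsub ⟨hhU, hhT⟩)⟩
  constructor
  · -- closedness of T ∪ {1}
    have h1 : T ∪ {1} = (Subtype.val '' (S ∪ {1})) ∪ X := by
      rw [Set.image_union]
      have : (Subtype.val '' ({1} : Set G)) = ({1} : Set H) := by
        simp
      rw [this, hT]
      ext h; constructor
      · rintro ((h | h) | h) <;> simp_all
      · rintro ((h | h) | h) <;> simp_all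
    rw [h1]
    refine IsClosed.union ?_ ?_
    · exact (hGclosed.isClosedEmbedding_subtypeVal.isClosed_iff_image_isClosed).mp hSclosed
    · -- X is closed
      rw [← isOpen_compl_iff, isOpen_iff_forall_mem_open]
      intro h hhX
      by_cases hhG : h ∈ G
      · exact ⟨G, fun g hg hgX => hXG hgX hg, hGopen, hhG⟩
      · obtain ⟨x, ⟨hxX, hxh⟩, huniq⟩ := hrep h hhG
        refine ⟨((fun h' => x⁻¹ * h') ⁻¹' G) ∩ {x}ᶜ, ?_, ?_, ?_⟩
        · rintro h' ⟨hh'U, hh'x⟩ hh'X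
          have hh'G : h' ∉ G := fun hh => hXG hh'X hh
          obtain ⟨y, -, huniq'⟩ := hrep h' hh'G
          have e1 : x = y := huniq' x ⟨hxX, hh'U⟩
          have e2 : h' = y := huniq' h' ⟨hh'X, by rw [inv_mul_cancel]; exact G.one_mem⟩
          exact hh'x (e2.trans e1.symm)
        · exact ((continuous_const.mul continuous_id).isOpen_preimage _ hGopen).inter
            isOpen_compl_singleton
        · exact ⟨hxh, fun he => hhX (by rw [Set.mem_singleton_iff] at he; rw [he]; exact hxX)⟩
  · -- density
    set K := (Subgroup.closure T).topologicalClosure with hK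
    have hTK : T ⊆ (K : Set H) := fun t ht =>
      Subgroup.le_topologicalClosure _ (Subgroup.subset_closure ht)
    have hGK : (G : Set H) ⊆ (K : Set H) := by
      intro g hg
      have h1 : (⟨g, hg⟩ : G) ∈ closure (Subgroup.closure S : Set G) := by
        rw [hSdense.closure_eq]; trivial
      have h2 : g ∈ closure (Subtype.val '' (Subgroup.closure S : Set G)) :=
        image_closure_subset_closure_image continuous_subtype_val
          (Set.mem_image_of_mem _ h1)
      have h3 : (Subtype.val '' (Subgroup.closure S : Set G)) ⊆ (Subgroup.closure T : Set H) := by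
        rintro _ ⟨y, hy, rfl⟩
        have h4 : (y : H) ∈ (Subgroup.closure S).map G.subtype := ⟨y, hy, rfl⟩
        rw [MonoidHom.map_closure] at h4
        have h5 : (⇑G.subtype '' S) = Subtype.val '' S := rfl
        rw [h5] at h4
        exact Subgroup.closure_mono Set.subset_union_left h4
      show g ∈ (K : Set H)
      rw [hK, Subgroup.topologicalClosure_coe]
      exact closure_mono h3 h2
    have hall : ∀ h : H, h ∈ K := by
      intro h
      by_cases hhG : h ∈ G
      · exact hGK hhG
      · obtain ⟨x, ⟨hxX, hxh⟩, -⟩ := hrep h hhG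
        have : h = x * (x⁻¹ * h) := by group
        rw [this]
        exact K.mul_mem (hTK (Or.inr hxX)) (hGK hxh)
    rw [dense_iff_closure_eq, ← Subgroup.topologicalClosure_coe]
    exact Set.eq_univ_of_forall hall
end
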